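/- For all nonnegative integers a, b, n with a + b ≤ n, the quantity Δ₂(n,a,b) := 2 · ∑_{j=1}^{b} (1/(n + 2 − j − a)) · (b − 1 + κ_{j−1} + κ_{b−j} − κ_b) is nonnegative: Δ₂(n,a,b) ≥ 0. -/

import Mathlib

open Finset Filter Topology

/-- The `n`-th harmonic number `H_n = ∑_{i=1}^n 1/i`. -/
noncomputable def H (n : ℕ) : ℝ := ∑ i ∈ Finset.range n, (1 : ℝ) / (i + 1)

/-- `κ_n = 2(n+1)H_n - 4n`, the mean number of key comparisons for QuickSort on `n` keys. -/
noncomputable def κ (n : ℕ) : ℝ := 2 * (n + 1) * H n - 4 * n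

lemma H_succ (n : ℕ) : H (n+1) = H n + 1/((n:ℝ)+1) := by
  simp [H, Finset.sum_range_succ]

lemma kappa_zero : κ 0 = 0 := by simp [κ, H]

lemma kappa_succ (b : ℕ) : ((b:ℝ)+1) * κ (b+1) = ((b:ℝ)+2) * κ b + 2*b := by
  have hb : ((b:ℝ)+1) ≠ 0 := by positivity
  simp only [κ, H_succ]
  push_cast
  field_simp
  ring

lemma kappa_convex (k : ℕ) : κ k + κ (k+2) - 2*κ (k+1) = 2/((k:ℝ)+2) := by
  have h1 : ((k:ℝ)+1) ≠ 0 := by positivity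
  have h2 : ((k:ℝ)+2) ≠ 0 := by positivity
  simp only [κ, show k+2 = (k+1)+1 from rfl, H_succ]
  push_cast
  field_simp
  ring

lemma dκ_mono : Monotone (fun k : ℕ => κ (k+1) - κ k) := by
  apply monotone_nat_of_le_succ
  intro k
  have h := kappa_convex k
  have h2 : (0:ℝ) ≤ 2/((k:ℝ)+2) := by positivity
  linarith

lemma kappa_rec (b : ℕ) : (b:ℝ) * κ b = (b:ℝ)*((b:ℝ)-1) + 2 * ∑ j ∈ Finset.range b, κ j := by
  induction b with
  | zero => simp [kappa_zero]
  | succ b ih =>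
    rw [Finset.sum_range_succ]
    have h := kappa_succ b
    push_cast
    linarith

lemma cheb (I : Finset ℕ) (S F : ℕ → ℝ) (hsum : ∑ j ∈ I, F j = 0)
    (h : ∀ i ∈ I, ∀ j ∈ I, 0 ≤ (S i - S j) * (F i - F j)) :
    0 ≤ (I.card : ℝ) * ∑ i ∈ I, S i * F i := by
  have h0 : 0 ≤ ∑ i ∈ I, ∑ j ∈ I, (S i - S j) * (F i - F j) :=
    Finset.sum_nonneg fun i hi => Finset.sum_nonneg fun j hj => h i hi j hj
  have expand : ∀ i : ℕ, ∑ j ∈ I, (S i - S j) * (F i - F j)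
      = (I.card : ℝ) * (S i * F i) - S i * (∑ j ∈ I, F j)
        - (∑ j ∈ I, S j) * F i + (∑ j ∈ I, S j * F j) := by
    intro i
    simp only [sub_mul, mul_sub]
    rw [Finset.sum_sub_distrib, Finset.sum_sub_distrib, Finset.sum_sub_distrib,
      Finset.sum_const, ← Finset.mul_sum, ← Finset.sum_mul, nsmul_eq_mul]
    ring
  rw [Finset.sum_congr rfl (fun i _ => expand i)] at h0
  simp only [hsum, mul_zero, sub_zero] at h0
  rw [Finset.sum_add_distrib, Finset.sum_sub_distrib, ← Finset.mul_sum] at h0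
  have e3 : ∑ x ∈ I, (∑ j ∈ I, S j) * F x = 0 := by rw [← Finset.mul_sum, hsum, mul_zero]
  have e4 : ∑ _x ∈ I, ∑ j ∈ I, (S j * F j) = (I.card:ℝ) * ∑ j ∈ I, S j * F j := by
    rw [Finset.sum_const, nsmul_eq_mul]
  rw [e3, e4] at h0
  linarith
theorem delta2_nonneg (a b n : ℕ) (h : a + b ≤ n) :
    0 ≤ 2 * ∑ j ∈ Finset.Icc 1 b,
      (1 / ((n : ℝ) + 2 - (j : ℝ) - (a : ℝ))) *
        ((b : ℝ) - 1 + κ (j - 1) + κ (b - j) - κ b) := by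
  rcases Nat.eq_zero_or_pos b with hb | hb
  · subst hb; simp
  set w : ℕ → ℝ := fun j => 1 / ((n:ℝ) + 2 - (j:ℝ) - (a:ℝ)) with hwdef
  set F : ℕ → ℝ := fun j => (b:ℝ) - 1 + κ (j-1) + κ (b-j) - κ b with hFdef
  set S : ℕ → ℝ := fun j => w j + w (b+1-j) with hSdef
  show 0 ≤ 2 * ∑ j ∈ Finset.Icc 1 b, w j * F j
  -- symmetry of F
  have hFsymm : ∀ j ∈ Finset.Icc 1 b, F (b+1-j) = F j := by
    intro j hj
    simp only [Finset.mem_Icc] at hj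
    simp only [hFdef]
    rw [show b + 1 - j - 1 = b - j from by omega, show b - (b + 1 - j) = j - 1 from by omega]
    ring
  -- sum of F is zero
  have hsum1 : ∑ j ∈ Finset.Icc 1 b, κ (j-1) = ∑ j ∈ Finset.range b, κ j := by
    rw [← Finset.Ico_add_one_right_eq_Icc, Finset.sum_Ico_eq_sum_range]
    simp
  have hsum2 : ∑ j ∈ Finset.Icc 1 b, κ (b-j) = ∑ j ∈ Finset.range b, κ j := by
    rw [← Finset.Ico_add_one_right_eq_Icc, Finset.sum_Ico_eq_sum_range]
    rw [Finset.sum_congr rfl (fun i _ => by rw [show b - (1+i) = b - 1 - i from by omega])]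
    simp only [show b + 1 - 1 = b from by omega]
    exact Finset.sum_range_reflect κ b
  have hFsum : ∑ j ∈ Finset.Icc 1 b, F j = 0 := by
    have e : ∑ j ∈ Finset.Icc 1 b, F j
        = (b:ℝ)*((b:ℝ)-1) + (∑ j ∈ Finset.Icc 1 b, κ (j-1))
          + (∑ j ∈ Finset.Icc 1 b, κ (b-j)) - (b:ℝ) * κ b := by
      simp only [hFdef]
      rw [Finset.sum_sub_distrib, Finset.sum_add_distrib, Finset.sum_add_distrib,
        Finset.sum_const, Finset.sum_const, nsmul_eq_mul, nsmul_eq_mul, Nat.card_Icc]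
      try rw [show b + 1 - 1 = b from by omega]
      try push_cast
      try ring
    rw [e, hsum1, hsum2]
    have := kappa_rec b
    linarith
  -- reflection identity for the weighted sum
  have hrefl : ∑ j ∈ Finset.Icc 1 b, w (b+1-j) * F j = ∑ j ∈ Finset.Icc 1 b, w j * F j := by
    rw [Finset.sum_congr rfl (fun j hj => by rw [← hFsymm j hj])]
    apply Finset.sum_nbij' (fun j => b + 1 - j) (fun j => b + 1 - j)
    · intro x hx; simp only [Finset.mem_Icc] at *; omega
    · intro x hx; simp only [Finset.mem_Icc] at *; omega
    · intro x hx; simp only [Finset.mem_Icc] at hx; omega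
    · intro x hx; simp only [Finset.mem_Icc] at hx; omega
    · intro x hx; rfl
  have hSF : ∑ j ∈ Finset.Icc 1 b, S j * F j = 2 * ∑ j ∈ Finset.Icc 1 b, w j * F j := by
    simp only [hSdef, add_mul]
    rw [Finset.sum_add_distrib, hrefl]
    ring
  -- monotonicity of F on the upper half
  have hFmono : ∀ i, 1 ≤ i → b + 1 ≤ 2*i → ∀ j, i ≤ j → j ≤ b → F i ≤ F j := by
    intro i hi h2i j hij
    induction j, hij using Nat.le_induction with
    | base => intro _; exact le_rfl
    | succ j hij ih =>
      intro hjb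
      refine le_trans (ih (by omega)) ?_
      obtain ⟨p, rfl⟩ : ∃ p, j = p + 1 := ⟨j - 1, by omega⟩
      simp only [hFdef]
      rw [show p + 1 + 1 - 1 = p + 1 from by omega, show p + 1 - 1 = p from by omega,
        show b - (p+1) = (b - (p+2)) + 1 from by omega]
      have hd := dκ_mono (show b - (p+2) ≤ p from by omega)
      simp only at hd
      linarith
  -- monotonicity of S on the upper half
  have hSmono : ∀ i, 1 ≤ i → b + 1 ≤ 2*i → ∀ j, i ≤ j → j ≤ b → S i ≤ S j := by
    intro i hi h2i j hij
    induction j, hij using Nat.le_induction with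
    | base => intro _; exact le_rfl
    | succ j hij ih =>
      intro hjb
      refine le_trans (ih (by omega)) ?_
      have hj1 : 1 ≤ j := le_trans hi hij
      have h2j : b + 1 ≤ 2*j := by omega
      simp only [hSdef, hwdef]
      rw [show b + 1 - (j+1) = b - j from by omega]
      rw [Nat.cast_sub (show j ≤ b + 1 from by omega), Nat.cast_sub (show j ≤ b from by omega)]
      push_cast
      have hab : (a:ℝ) + b ≤ n := by exact_mod_cast h
      have hjb' : (j:ℝ) + 1 ≤ b := by exact_mod_cast hjb
      have h2j' : (b:ℝ) + 1 ≤ 2*j := by exact_mod_cast h2j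
      have hj1' : (1:ℝ) ≤ j := by exact_mod_cast hj1
      set A : ℝ := (n:ℝ) + 2 - a with hA
      have hD1 : (0:ℝ) < A - (j+1) := by simp only [hA]; linarith
      have hD1' : (0:ℝ) < A - j := by simp only [hA]; linarith
      have hD2 : (0:ℝ) < A - (b+1-(j:ℝ)) := by simp only [hA]; linarith
      have hD2' : (0:ℝ) < A - (b-(j:ℝ)) := by simp only [hA]; linarith
      have key : (A - (j+1)) * (A - j) ≤ (A - (b+1-(j:ℝ))) * (A - (b-(j:ℝ))) := by
        nlinarith [hD1, hD2]
      have e : 1/(A-(j+1)) + 1/(A-(b-(j:ℝ))) - (1/(A-(j:ℝ)) + 1/(A-(b+1-(j:ℝ))))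
          = 1/((A-(j+1))*(A-(j:ℝ))) - 1/((A-(b+1-(j:ℝ)))*(A-(b-(j:ℝ)))) := by
        field_simp
        ring
      have hmul1 : (0:ℝ) < (A-(j+1))*(A-(j:ℝ)) := mul_pos hD1 hD1'
      have hdiv := one_div_le_one_div_of_le hmul1 key
      have goal' : 1/(A-(j:ℝ)) + 1/(A-(b+1-(j:ℝ))) ≤ 1/(A-(j+1)) + 1/(A-(b-(j:ℝ))) := by
        linarith
      convert goal' using 2
      · rfl
      all_goals (simp only [hA]; ring)
  -- upper-half representative
  have hupper : ∀ i ∈ Finset.Icc 1 b, ∃ i', 1 ≤ i' ∧ i' ≤ b ∧ b+1 ≤ 2*i' ∧ F i' = F i ∧ S i' = S i := by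
    intro i hi
    have hi' := hi
    simp only [Finset.mem_Icc] at hi'
    rcases le_or_gt (b+1) (2*i) with hc | hc
    · exact ⟨i, hi'.1, hi'.2, hc, rfl, rfl⟩
    · refine ⟨b+1-i, by omega, by omega, by omega, hFsymm i hi, ?_⟩
      simp only [hSdef]
      rw [show b+1-(b+1-i) = i from by omega]
      ring
  have hprod : ∀ i ∈ Finset.Icc 1 b, ∀ j ∈ Finset.Icc 1 b, 0 ≤ (S i - S j) * (F i - F j) := by
    intro i hi j hj
    obtain ⟨i', hi1, hi2, hi3, hiF, hiS⟩ := hupper i hi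
    obtain ⟨j', hj1, hj2, hj3, hjF, hjS⟩ := hupper j hj
    rw [← hiF, ← hjF, ← hiS, ← hjS]
    rcases le_total i' j' with hc | hc
    · have h1 := hSmono i' hi1 hi3 j' hc hj2
      have h2 := hFmono i' hi1 hi3 j' hc hj2
      nlinarith
    · have h1 := hSmono j' hj1 hj3 i' hc hi2
      have h2 := hFmono j' hj1 hj3 i' hc hi2
      nlinarith
  have hcheb := cheb (Finset.Icc 1 b) S F hFsum hprod
  rw [Nat.card_Icc, show b + 1 - 1 = b from by omega] at hcheb
  have hbpos : (0:ℝ) < b := by exact_mod_cast hb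
  have h4 : 0 ≤ ∑ j ∈ Finset.Icc 1 b, S j * F j := by
    by_contra hneg
    push_neg at hneg
    nlinarith
  linarith [hSF, h4]
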